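/- Let f be a permutation of F_q of Carlitz rank r with r ≥ 1 and deg(f) > 1 (equivalently, f is not F_q-affine). Then AddInd(f) ≥ min{q/r, (q − 2r)/2}. -/

import Mathlib

open Polynomial

/-- A function `f : 𝔽_q → 𝔽_q` (with `q = p^n`) has codimension at most `k` if there are an
`𝔽_p`-linear map `L : 𝔽_q → 𝔽_q`, an `𝔽_p`-subspace `U` of dimension `n - k`, and a constant
`a_V` for each coset `V` of `U`, such that `f(x) = L(x) + a_{U+x}` for all `x`. -/
def HasCodimAtMost (p n : ℕ) {F : Type*} [Field F] [Fintype F] [Algebra (ZMod p) F]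
    (f : F → F) (k : ℕ) : Prop :=
  ∃ (L : F →ₗ[ZMod p] F) (U : Submodule (ZMod p) F) (a : F ⧸ U → F),
    Module.finrank (ZMod p) ↥U = n - k ∧
    ∀ x : F, f x = L x + a (Submodule.Quotient.mk x)

/-- The codimension `codim f` is the smallest `k` such that `f` has codimension at most `k`. -/
noncomputable def codim (p n : ℕ) {F : Type*} [Field F] [Fintype F] [Algebra (ZMod p) F]
    (f : F → F) : ℕ :=
  sInf {k | HasCodimAtMost p n f k}

/-- The additive index of `f` is `AddInd f = p ^ codim f`. -/
noncomputable def addInd (p n : ℕ) {F : Type*} [Field F] [Fintype F] [Algebra (ZMod p) F]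
    (f : F → F) : ℕ :=
  p ^ codim p n f

/-- The Carlitz expression `P_m(a_0, …, a_{m+1}; x)`: `carlitzIter 0 a x = a 0 * x + a 1`, and
`carlitzIter (m+1) a x = (carlitzIter m a x)^(q-2) + a (m+2)`. -/
def carlitzIter {F : Type*} [Field F] [Fintype F] : ℕ → (ℕ → F) → F → F
  | 0, a, x => a 0 * x + a 1
  | (m + 1), a, x => (carlitzIter m a x) ^ (Fintype.card F - 2) + a (m + 2)

/-- `f` has Carlitz rank at most `m`: it can be represented as
`f(x) = (⋯((a_0 x + a_1)^(q-2) + a_2)^(q-2) + ⋯ + a_m)^(q-2) + a_{m+1}` with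
`a_0, a_2, …, a_m ≠ 0`. -/
def HasCrkAtMost {F : Type*} [Field F] [Fintype F] (f : F → F) (m : ℕ) : Prop :=
  ∃ a : ℕ → F, a 0 ≠ 0 ∧ (∀ i, 2 ≤ i → i ≤ m → a i ≠ 0) ∧ ∀ x, f x = carlitzIter m a x

/-- The Carlitz rank of `f` is the smallest `m` admitting such a representation. -/
noncomputable def crk {F : Type*} [Field F] [Fintype F] (f : F → F) : ℕ :=
  sInf {m | HasCrkAtMost f m}

/-- The unique polynomial of degree at most `q - 1` interpolating `f` on `𝔽_q`;
`deg f` and the weight `w(f)` are its degree and its number of nonzero coefficients. -/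
noncomputable def interp {F : Type*} [Field F] [Fintype F] [DecidableEq F] (f : F → F) : Polynomial F :=
  Lagrange.interpolate Finset.univ id f

section Aux

variable {F : Type*} [Field F] [Fintype F]

lemma pow_card_sub_two_eq_inv (h3 : 3 ≤ Fintype.card F) {y : F} (hy : y ≠ 0) :
    y ^ (Fintype.card F - 2) = y⁻¹ := by
  have h1 : y ^ (Fintype.card F - 1) = 1 := FiniteField.pow_card_sub_one_eq_one y hy
  have h2 : Fintype.card F - 1 = (Fintype.card F - 2) + 1 := by omega
  rw [h2, pow_succ] at h1
  exact eq_inv_of_mul_eq_one_left h1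

lemma carlitz_mobius [DecidableEq F] (h3 : 3 ≤ Fintype.card F) (a : ℕ → F) (ha : a 0 ≠ 0) :
    ∀ m : ℕ, ∃ α β γ δ : F, ∃ E : Finset F,
      α * δ - β * γ ≠ 0 ∧ E.card ≤ m ∧
      ∀ x ∉ E, γ * x + δ ≠ 0 ∧ carlitzIter m a x = (α * x + β) / (γ * x + δ) := by
  intro m
  induction m with
  | zero =>
    refine ⟨a 0, a 1, 0, 1, ∅, by simpa using ha, by simp, fun x _ => ?_⟩
    constructor
    · simp
    · show a 0 * x + a 1 = _
      simp
  | succ m ih =>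
    obtain ⟨α, β, γ, δ, E, hdet, hcard, hmob⟩ := ih
    have hstep : ∀ E' : Finset F, E'.card ≤ m + 1 →
        (∀ x ∉ E', x ∉ E ∧ α * x + β ≠ 0) →
        ∃ α' β' γ' δ' : F, ∃ Ee : Finset F,
          α' * δ' - β' * γ' ≠ 0 ∧ Ee.card ≤ m + 1 ∧
          ∀ x ∉ Ee, γ' * x + δ' ≠ 0 ∧
            carlitzIter (m + 1) a x = (α' * x + β') / (γ' * x + δ') := by
      intro E' hc hE'
      refine ⟨a (m + 2) * α + γ, a (m + 2) * β + δ, α, β, E', ?_, hc, ?_⟩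
      · intro h; apply hdet; linear_combination -h
      · intro x hx
        obtain ⟨hxE, hnum⟩ := hE' x hx
        obtain ⟨hden, hval⟩ := hmob x hxE
        refine ⟨hnum, ?_⟩
        show (carlitzIter m a x) ^ (Fintype.card F - 2) + a (m + 2) = _
        rw [hval, pow_card_sub_two_eq_inv h3 (div_ne_zero hnum hden)]
        field_simp
        ring
    by_cases hα : α = 0
    · have hβ : β ≠ 0 := by intro hβ; apply hdet; rw [hα, hβ]; ring
      exact hstep E (le_trans hcard (by omega))
        (fun x hx => ⟨hx, by rw [hα]; simpa using hβ⟩)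
    · refine hstep (insert (-β / α) E) (le_trans (Finset.card_insert_le _ _) (by omega)) ?_
      intro x hx
      refine ⟨fun hxE => hx (Finset.mem_insert_of_mem hxE), fun h => hx ?_⟩
      have hxv : x = -β / α := by field_simp; linear_combination h
      rw [hxv]; exact Finset.mem_insert_self _ _

end Aux

/-- Let `f` be a permutation of `𝔽_q` of Carlitz rank `r ≥ 1` with
`deg f > 1` (equivalently, not `𝔽_q`-affine). Then `AddInd f ≥ min (q/r) ((q - 2r)/2)`. -/
theorem stmt8 (p n : ℕ) [Fact p.Prime] (hn : 1 ≤ n) {F : Type*} [Field F] [Fintype F]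
    [Algebra (ZMod p) F] [DecidableEq F] (hcard : Fintype.card F = p ^ n)
    (f : F → F) (hf : Function.Bijective f) (r : ℕ) (hr : crk f = r) (hr1 : 1 ≤ r)
    (hdeg : 1 < (interp f).natDegree) :
    min ((Fintype.card F : ℝ) / r) (((Fintype.card F : ℝ) - 2 * r) / 2)
      ≤ (addInd p n f : ℝ) := by
  classical
  have hp : p.Prime := Fact.out
  set q := Fintype.card F with hq
  -- `q ≥ 3`
  have hne : interp f ≠ 0 := fun h => by simp [h] at hdeg
  have hdeglt : (interp f).natDegree < q := by
    have h1 : (interp f).degree < ((Finset.univ : Finset F).card : WithBot ℕ) := by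
      unfold interp
      exact Lagrange.degree_interpolate_lt _ (Set.injOn_id _)
    rw [Finset.card_univ] at h1
    exact (Polynomial.natDegree_lt_iff_degree_lt hne).mpr h1
  have hq3 : 3 ≤ q := by omega
  -- Carlitz representation
  have hcrkne : {m | HasCrkAtMost f m}.Nonempty := by
    by_contra h
    rw [Set.not_nonempty_iff_eq_empty] at h
    rw [crk, h, Nat.sInf_empty] at hr
    omega
  have hcrk : HasCrkAtMost f r := by rw [← hr]; exact Nat.sInf_mem hcrkne
  obtain ⟨a, ha0, -, hfa⟩ := hcrk
  obtain ⟨α, β, γ, δ, E, hdet, hEcard, hmob'⟩ := carlitz_mobius hq3 a ha0 r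
  have hmob : ∀ x ∉ E, γ * x + δ ≠ 0 ∧ f x = (α * x + β) / (γ * x + δ) := by
    intro x hx
    obtain ⟨h1, h2⟩ := hmob' x hx
    exact ⟨h1, by rw [hfa x, h2]⟩
  -- codim structure
  have hcodim_n : HasCodimAtMost p n f n := by
    refine ⟨0, ⊥, fun v => f ((Submodule.quotEquivOfEqBot ⊥ rfl) v), ?_, ?_⟩
    · simp
    · intro x
      simp [Submodule.quotEquivOfEqBot_apply_mk]
  have hcodimne : {k | HasCodimAtMost p n f k}.Nonempty := ⟨n, hcodim_n⟩
  set k := codim p n f with hk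
  have hkmem : HasCodimAtMost p n f k := Nat.sInf_mem hcodimne
  have hkn : k ≤ n := Nat.sInf_le hcodim_n
  obtain ⟨L, U, av, hUrank, hfL⟩ := hkmem
  -- cardinalities
  haveI : Module.Finite (ZMod p) F := Module.Finite.of_finite
  haveI : Fintype U := Fintype.ofFinite _
  haveI : Finite (F ⧸ U) := Finite.of_surjective _ (Submodule.Quotient.mk_surjective U)
  haveI : Fintype (F ⧸ U) := Fintype.ofFinite _
  have hcardU : Fintype.card U = p ^ (n - k) := by
    rw [Module.card_eq_pow_finrank (K := ZMod p), ZMod.card, hUrank]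
  have hrankF : Module.finrank (ZMod p) F = n := by
    have h := Module.card_eq_pow_finrank (K := ZMod p) (V := F)
    rw [ZMod.card, ← hq, hcard] at h
    exact (Nat.pow_right_injective hp.two_le h.symm)
  have hcardQ : Fintype.card (F ⧸ U) = p ^ k := by
    rw [Module.card_eq_pow_finrank (K := ZMod p), ZMod.card]
    congr 1
    have h := Submodule.finrank_quotient_add_finrank U
    rw [hUrank, hrankF] at h
    omega
  set s := p ^ (n - k) with hs
  have hqsk : q = s * p ^ k := by
    rw [hcard, hs, ← pow_add]
    congr 1
    omega
  -- negation
  by_contra hcon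
  push_neg at hcon
  rw [lt_min_iff] at hcon
  obtain ⟨hc1, hc2⟩ := hcon
  have haddeq : addInd p n f = p ^ k := rfl
  have hr0 : (0 : ℝ) < (r : ℝ) := by exact_mod_cast hr1
  have hc1' : r * p ^ k < q := by
    rw [haddeq, lt_div_iff₀ hr0] at hc1
    have hcast : ((r * p ^ k : ℕ) : ℝ) < (q : ℝ) := by push_cast at hc1 ⊢; linarith
    exact_mod_cast hcast
  have hc2' : 2 * p ^ k + 2 * r < q := by
    rw [haddeq] at hc2
    have h2 : ((2 * p ^ k + 2 * r : ℕ) : ℝ) < (q : ℝ) := by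
      rw [lt_div_iff₀ (by norm_num : (0:ℝ) < 2)] at hc2
      push_cast at hc2 ⊢
      linarith
    exact_mod_cast h2
  have hpk1 : 1 ≤ p ^ k := Nat.one_le_pow _ _ hp.pos
  have hrs : r < s := by
    rw [hqsk] at hc1'
    exact lt_of_mul_lt_mul_right hc1' (Nat.zero_le _)
  -- fibers of the quotient map
  set fib : F ⧸ U → Finset F :=
    fun V => Finset.univ.filter (fun x => (Submodule.Quotient.mk x : F ⧸ U) = V) with hfib
  have hfibcard : ∀ V, (fib V).card = s := by
    intro V
    obtain ⟨x0, hx0⟩ := Submodule.Quotient.mk_surjective U V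
    have himg : fib V = ((U : Set F).toFinset).image (fun u => x0 + u) := by
      ext z
      simp only [hfib, Finset.mem_filter, Finset.mem_univ, true_and, Finset.mem_image,
        Set.mem_toFinset]
      constructor
      · intro h
        refine ⟨z - x0, ?_, by ring⟩
        rw [← hx0] at h
        exact (Submodule.Quotient.eq U).mp h
      · rintro ⟨u, hu, rfl⟩
        rw [← hx0]
        exact (Submodule.Quotient.eq U).mpr (by simpa using hu)
    rw [himg, Finset.card_image_of_injective _ (add_right_injective x0)]
    rw [Set.toFinset_card]
    rw [← hcardU]
    exact Fintype.card_congr (Equiv.refl _)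
  -- choose a coset with few exceptional points
  have hsum : ∑ V : F ⧸ U,
      (E.filter (fun x => (Submodule.Quotient.mk x : F ⧸ U) = V)).card = E.card :=
    (Finset.card_eq_sum_card_fiberwise (fun x _ => Finset.mem_univ _)).symm
  obtain ⟨V₀, -, hV₀min⟩ := Finset.exists_min_image Finset.univ
    (fun V => (E.filter (fun x => (Submodule.Quotient.mk x : F ⧸ U) = V)).card)
    ⟨Submodule.Quotient.mk 0, Finset.mem_univ _⟩
  set t := (E.filter (fun x => (Submodule.Quotient.mk x : F ⧸ U) = V₀)).card with ht
  have htbound : p ^ k * t ≤ r := by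
    have h1 : p ^ k * t = ∑ _V : F ⧸ U, t := by
      rw [Finset.sum_const, Finset.card_univ, hcardQ, smul_eq_mul]
    calc p ^ k * t = ∑ _V : F ⧸ U, t := h1
      _ ≤ ∑ V : F ⧸ U,
          (E.filter (fun x => (Submodule.Quotient.mk x : F ⧸ U) = V)).card :=
        Finset.sum_le_sum (fun V _ => hV₀min V (Finset.mem_univ _))
      _ = E.card := hsum
      _ ≤ r := hEcard
  set good := fib V₀ \ E with hgood
  have hm : s - t ≤ good.card := by
    have hsd : good
        = fib V₀ \ (E.filter (fun x => (Submodule.Quotient.mk x : F ⧸ U) = V₀)) := by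
      rw [hgood]
      ext z
      simp only [hfib, Finset.mem_sdiff, Finset.mem_filter, Finset.mem_univ, true_and]
      tauto
    rw [hsd, ← hfibcard V₀]
    exact Finset.le_card_sdiff _ _
  have hmle : good.card ≤ s := by
    rw [← hfibcard V₀]
    exact Finset.card_le_card Finset.sdiff_subset
  have hgoodmem : ∀ x ∈ good, x ∉ E ∧ (Submodule.Quotient.mk x : F ⧸ U) = V₀ := by
    intro x hx
    rw [hgood, Finset.mem_sdiff] at hx
    exact ⟨hx.2, (Finset.mem_filter.mp hx.1).2⟩
  by_cases hγ : γ = 0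
  · -- affine case: contradiction with `deg > 1`
    have hδ : δ ≠ 0 := fun h => hdet (by rw [hγ, h]; ring)
    have hAx : ∀ x ∉ E, f x = (α / δ) * x + β / δ := by
      intro x hx
      obtain ⟨hden, hval⟩ := hmob x hx
      rw [hval, hγ]
      field_simp
      rw [mul_zero, zero_add, mul_div_assoc, div_self hδ, mul_one]
    have hLA : ∀ u ∈ U, L u = (α / δ) * u := by
      intro u hu
      have hcard2 : (E ∪ E.image (fun z => z - u)).card < q := by
        have h1 := Finset.card_union_le E (E.image (fun z => z - u))
        have h2 := Finset.card_image_le (s := E) (f := fun z => z - u)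
        omega
      obtain ⟨y, hy⟩ : ∃ y, y ∉ E ∪ E.image (fun z => z - u) := by
        by_contra h
        push_neg at h
        have hsub : (Finset.univ : Finset F) ⊆ E ∪ E.image (fun z => z - u) :=
          fun z _ => h z
        have := Finset.card_le_card hsub
        rw [Finset.card_univ] at this
        omega
      have hyE : y ∉ E := fun h => hy (Finset.mem_union_left _ h)
      have hyuE : y + u ∉ E := fun h =>
        hy (Finset.mem_union_right _ (Finset.mem_image.mpr ⟨y + u, h, by ring⟩))
      have hmk : (Submodule.Quotient.mk (y + u) : F ⧸ U) = Submodule.Quotient.mk y :=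
        (Submodule.Quotient.eq U).mpr (by simpa using hu)
      have e1 := hfL (y + u)
      rw [hmk] at e1
      have e2 := hfL y
      have e3 := hAx _ hyuE
      have e4 := hAx _ hyE
      have hadd : L (y + u) = L y + L u := map_add L y u
      linear_combination e3 - e1 + e2 - e4 - hadd
    have hfAx : ∀ x, f x = (α / δ) * x + β / δ := by
      intro x
      have hnon : (fib (Submodule.Quotient.mk x) \ E).Nonempty := by
        apply Finset.card_pos.mp
        have h1 := Finset.le_card_sdiff E (fib (Submodule.Quotient.mk x))
        rw [hfibcard] at h1
        omega
      obtain ⟨x0, hx0⟩ := hnon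
      rw [Finset.mem_sdiff] at hx0
      obtain ⟨hx0f, hx0E⟩ := hx0
      have hx0V : (Submodule.Quotient.mk x0 : F ⧸ U) = Submodule.Quotient.mk x :=
        (Finset.mem_filter.mp hx0f).2
      have hx0U : x - x0 ∈ U := (Submodule.Quotient.eq U).mp hx0V.symm
      have h1 := hfL x
      rw [← hx0V] at h1
      have h2 := hfL x0
      have h3 := hAx x0 hx0E
      have h4 := hLA _ hx0U
      have hsub : L (x - x0) = L x - L x0 := map_sub L x x0
      linear_combination h1 - h2 + h3 + h4 - hsub
    have hP : interp f = Polynomial.C (α / δ) * Polynomial.X + Polynomial.C (β / δ) := by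
      unfold interp
      have hdlt : (Polynomial.C (α / δ) * Polynomial.X + Polynomial.C (β / δ)).degree
          < ((Finset.univ : Finset F).card : WithBot ℕ) := by
        refine lt_of_le_of_lt Polynomial.degree_linear_le ?_
        rw [Finset.card_univ]
        exact_mod_cast (by omega : 1 < q)
      have heq := Lagrange.eq_interpolate (s := (Finset.univ : Finset F)) (v := id)
        (Set.injOn_id _) hdlt
      rw [heq]
      apply Lagrange.interpolate_eq_of_values_eq_on
      intro x _
      simp [hfAx x]
    rw [hP] at hdeg
    have := Polynomial.natDegree_linear_le (a := α / δ) (b := β / δ)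
    omega
  · -- Möbius case: double counting
    have hrel : ∀ x1 ∈ good, ∀ x2 ∈ good,
        L (x1 - x2) * ((γ * x1 + δ) * (γ * x2 + δ)) = (α * δ - β * γ) * (x1 - x2) := by
      intro x1 h1 x2 h2
      obtain ⟨h1E, h1V⟩ := hgoodmem x1 h1
      obtain ⟨h2E, h2V⟩ := hgoodmem x2 h2
      obtain ⟨g1, v1⟩ := hmob x1 h1E
      obtain ⟨g2, v2⟩ := hmob x2 h2E
      have hmk : (Submodule.Quotient.mk x1 : F ⧸ U) = Submodule.Quotient.mk x2 := by
        rw [h1V, h2V]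
      have e1 := hfL x1
      rw [hmk] at e1
      have e2 := hfL x2
      have hx1 : L x1 = (α * x1 + β) / (γ * x1 + δ) - av (Submodule.Quotient.mk x2) := by
        linear_combination v1 - e1
      have hx2 : L x2 = (α * x2 + β) / (γ * x2 + δ) - av (Submodule.Quotient.mk x2) := by
        linear_combination v2 - e2
      rw [map_sub, hx1, hx2]
      rw [sub_sub_sub_cancel_right, div_sub_div _ _ g1 g2, div_mul_eq_mul_div, div_eq_iff (mul_ne_zero g1 g2)]
      ring
    have hS2 : ∀ d : F, d ≠ 0 → (good.filter (fun x => x - d ∈ good)).card ≤ 2 := by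
      intro d hd
      by_contra hc
      push_neg at hc
      rw [Finset.two_lt_card] at hc
      obtain ⟨x, hx, y, hy, z, hz, hxy, hxz, hyz⟩ := hc
      have key : ∀ w ∈ good.filter (fun x => x - d ∈ good),
          ∀ w' ∈ good.filter (fun x => x - d ∈ good), w ≠ w' →
          γ * (w + w') = γ * d - 2 * δ := by
        intro w hw w' hw' hne'
        rw [Finset.mem_filter] at hw hw'
        have r1 := hrel w hw.1 (w - d) hw.2
        have r2 := hrel w' hw'.1 (w' - d) hw'.2
        rw [show w - (w - d) = d from by ring] at r1
        rw [show w' - (w' - d) = d from by ring] at r2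
        have hLd : L d ≠ 0 := by
          intro h
          rw [h, zero_mul] at r1
          exact (mul_ne_zero hdet hd) r1.symm
        have hgg := mul_left_cancel₀ hLd (r1.trans r2.symm)
        have hfac : (w - w') * (γ * (γ * (w + w') - γ * d + 2 * δ)) = 0 := by
          linear_combination hgg
        rcases mul_eq_zero.mp hfac with h | h
        · exact absurd (sub_eq_zero.mp h) hne'
        · rcases mul_eq_zero.mp h with h' | h'
          · exact absurd h' hγ
          · linear_combination h'
      have h1 := key x hx y hy hxy
      have h2 := key x hx z hz hxz
      have : γ * y = γ * z := by linear_combination h1 - h2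
      exact hyz (mul_left_cancel₀ hγ this)
    set U0 := ((U : Set F).toFinset).erase 0 with hU0
    have hU0card : U0.card = s - 1 := by
      rw [hU0, Finset.card_erase_of_mem (by rw [Set.mem_toFinset]; exact U.zero_mem)]
      rw [Set.toFinset_card]
      rw [show Fintype.card ((U : Set F) : Type _) = Fintype.card U from rfl, hcardU]
    have hsubset : good.offDiag ⊆ U0.biUnion
        (fun d => (good.filter (fun x => x - d ∈ good)).image (fun x => (x, x - d))) := by
      rintro ⟨x1, x2⟩ hmem
      rw [Finset.mem_offDiag] at hmem
      obtain ⟨h1, h2, hne'⟩ := hmem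
      rw [Finset.mem_biUnion]
      refine ⟨x1 - x2, ?_, ?_⟩
      · rw [hU0, Finset.mem_erase]
        refine ⟨sub_ne_zero.mpr hne', ?_⟩
        rw [Set.mem_toFinset]
        exact (Submodule.Quotient.eq U).mp ((hgoodmem x1 h1).2.trans (hgoodmem x2 h2).2.symm)
      · rw [Finset.mem_image]
        refine ⟨x1, Finset.mem_filter.mpr ⟨h1, ?_⟩, ?_⟩
        · rw [show x1 - (x1 - x2) = x2 from by ring]; exact h2
        · have hxx : x1 - (x1 - x2) = x2 := by ring
          simp [hxx]
    have hcount : good.card * good.card - good.card ≤ 2 * (s - 1) := by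
      calc good.card * good.card - good.card = good.offDiag.card :=
            (Finset.offDiag_card _).symm
        _ ≤ (U0.biUnion (fun d =>
              (good.filter (fun x => x - d ∈ good)).image (fun x => (x, x - d)))).card :=
            Finset.card_le_card hsubset
        _ ≤ ∑ d ∈ U0,
              ((good.filter (fun x => x - d ∈ good)).image (fun x => (x, x - d))).card :=
            Finset.card_biUnion_le
        _ ≤ ∑ _d ∈ U0, 2 := Finset.sum_le_sum (fun d hd =>
            le_trans Finset.card_image_le
              (hS2 d (Finset.ne_of_mem_erase (by rw [← hU0]; exact hd))))
        _ = 2 * (s - 1) := by rw [Finset.sum_const, hU0card, smul_eq_mul, mul_comm]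
    -- numeric contradiction
    have hts : 2 * t + 3 ≤ s := by
      rw [hqsk] at hc2'
      have e1 : 2 * (p ^ k * t) ≤ 2 * r := by omega
      have h1 : p ^ k * (2 * t + 2) < p ^ k * s := by
        have e2 : p ^ k * (2 * t + 2) = 2 * (p ^ k * t) + 2 * p ^ k := by ring
        have e3 : s * p ^ k = p ^ k * s := by ring
        linarith
      have h2 : 2 * t + 2 < s := lt_of_mul_lt_mul_left h1 (Nat.zero_le _)
      omega
    obtain ⟨m, hmeq⟩ : ∃ m, good.card = m := ⟨_, rfl⟩
    rw [hmeq] at hm hmle hcount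
    obtain ⟨e, he⟩ := Nat.exists_eq_add_of_le hts
    have hm3 : t + 3 + e ≤ m := by omega
    have hgg2 : (t + 3 + e) * (t + 3 + e) ≤ m * m := Nat.mul_le_mul hm3 hm3
    have hmm' : m * m ≤ 2 * (s - 1) + m := Nat.sub_le_iff_le_add.mp hcount
    have hs1 : s - 1 = 2 * t + 2 + e := by omega
    rw [hs1] at hmm'
    have hfin : (t * t + 2 * (t * e) + e * e) + (6 * t + 6 * e + 9) ≤ 6 * t + 3 * e + 7 := by
      calc (t * t + 2 * (t * e) + e * e) + (6 * t + 6 * e + 9)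
          = (t + 3 + e) * (t + 3 + e) := by ring
        _ ≤ m * m := hgg2
        _ ≤ 2 * (2 * t + 2 + e) + m := hmm'
        _ ≤ 2 * (2 * t + 2 + e) + (2 * t + 3 + e) := by omega
        _ = 6 * t + 3 * e + 7 := by ring
    have h9 := le_trans (Nat.le_add_left (6 * t + 6 * e + 9) (t * t + 2 * (t * e) + e * e)) hfin
    omega
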